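/- Completeness of LP_CS: for every constant specification CS for LP and every formula A, if A is not derivable in the Hilbert system LP_CS then there exists a Fitting model M for LP_CS and a world w in M such that M,w ⊮ A. -/

import Mathlib

namespace JustificationLogic

/-- Justification terms: constants, variables, application, sum, and proof checker `!`. -/
inductive Term : Type
  | const : ℕ → Term
  | var : ℕ → Term
  | app : Term → Term → Term
  | sum : Term → Term → Term
  | bang : Term → Term
  deriving DecidableEq

/-- Formulas of justification logic: atoms, negation, implication, and `t : A`. -/
inductive Formula : Type
  | atom : ℕ → Formula
  | neg : Formula → Formula
  | impl : Formula → Formula → Formula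
  | just : Term → Formula → Formula
  deriving DecidableEq

/-- Disjunction, defined classically: `A ∨ B := ¬A → B`. -/
def Formula.or (A B : Formula) : Formula := (Formula.neg A).impl B

/-- Falsum, defined as the negation of a propositional tautology. -/
def Formula.falsum : Formula := Formula.neg ((Formula.atom 0).impl (Formula.atom 0))

/-- Number of symbols of a term. -/
def Term.size : Term → ℕ
  | .const _ => 1
  | .var _ => 1
  | .app s t => s.size + t.size + 1
  | .sum s t => s.size + t.size + 1
  | .bang t => t.size + 1

/-- Number of symbols of a formula. -/
def Formula.size : Formula → ℕ
  | .atom _ => 1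
  | .neg A => A.size + 1
  | .impl A B => A.size + B.size + 1
  | .just t A => t.size + A.size + 1

/-- An explicit numerical code for terms (an injective Gödel numbering). -/
def Term.code : Term → ℕ
  | .const n => Nat.pair 0 n
  | .var n => Nat.pair 1 n
  | .app s t => Nat.pair 2 (Nat.pair s.code t.code)
  | .sum s t => Nat.pair 3 (Nat.pair s.code t.code)
  | .bang t => Nat.pair 4 t.code

/-- An explicit numerical code for formulas (an injective Gödel numbering). -/
def Formula.code : Formula → ℕ
  | .atom n => Nat.pair 0 n
  | .neg A => Nat.pair 1 A.code
  | .impl A B => Nat.pair 2 (Nat.pair A.code B.code)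
  | .just t A => Nat.pair 3 (Nat.pair t.code A.code)

/-- Substitution of terms for term variables. -/
def Term.subst (σ : ℕ → Term) : Term → Term
  | .const n => .const n
  | .var n => σ n
  | .app s t => .app (s.subst σ) (t.subst σ)
  | .sum s t => .sum (s.subst σ) (t.subst σ)
  | .bang t => .bang (t.subst σ)

/-- Simultaneous substitution of terms for term variables and formulas for atoms. -/
def Formula.subst (σ : ℕ → Term) (τ : ℕ → Formula) : Formula → Formula
  | .atom n => τ n
  | .neg A => .neg (A.subst σ τ)
  | .impl A B => .impl (A.subst σ τ) (B.subst σ τ)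
  | .just t A => .just (t.subst σ) (A.subst σ τ)

/-- `towerT c n = !ⁿc`. -/
def towerT (c : Term) : ℕ → Term
  | 0 => c
  | n + 1 => Term.bang (towerT c n)

/-- `towerF c A n = !ⁿ⁻¹c : ⋯ : !c : c : A` (and `A` for `n = 0`), so that
`(towerT c n) : (towerF c A n)` is the `n`-th formula produced by the rule (AN!). -/
def towerF (c : Term) (A : Formula) : ℕ → Formula
  | 0 => A
  | n + 1 => Formula.just (towerT c n) (towerF c A n)

/-- The axioms of the justification logics considered, with switches `hd`, `ht`, `h4`
for the axioms (jd), (jt), (j4).  The propositional part (A1) is given by three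
standard Hilbert-style schemes axiomatizing classical propositional logic. -/
inductive Ax (hd ht h4 : Bool) : Formula → Prop
  | k (A B : Formula) : Ax hd ht h4 (A.impl (B.impl A))
  | s (A B C : Formula) :
      Ax hd ht h4 ((A.impl (B.impl C)).impl ((A.impl B).impl (A.impl C)))
  | dn (A B : Formula) :
      Ax hd ht h4 (((A.neg).impl (B.neg)).impl (B.impl A))
  | a2 (t s : Term) (A B : Formula) :
      Ax hd ht h4 ((Formula.just t (A.impl B)).impl
        ((Formula.just s A).impl (Formula.just (Term.app t s) B)))
  | a3 (t s : Term) (A : Formula) :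
      Ax hd ht h4 (((Formula.just t A).or (Formula.just s A)).impl
        (Formula.just (Term.sum t s) A))
  | jd (t : Term) : hd = true →
      Ax hd ht h4 ((Formula.just t Formula.falsum).impl Formula.falsum)
  | jt (t : Term) (A : Formula) : ht = true →
      Ax hd ht h4 ((Formula.just t A).impl A)
  | j4 (t : Term) (A : Formula) : h4 = true →
      Ax hd ht h4 ((Formula.just t A).impl
        (Formula.just (Term.bang t) (Formula.just t A)))

/-- Axioms of the respective logics. -/
def AxJ : Formula → Prop := Ax false false false
def AxJT : Formula → Prop := Ax false true false
def AxJD : Formula → Prop := Ax true false false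
def AxJ4 : Formula → Prop := Ax false false true
def AxJD4 : Formula → Prop := Ax true false true
def AxLP : Formula → Prop := Ax false true true

/-- `CS` is a constant specification for the logic with axioms `Axm`:
every member of `CS` is of the form `c : A` with `c` a constant and `A` an axiom. -/
def ConstSpec (Axm : Formula → Prop) (CS : Set Formula) : Prop :=
  ∀ F ∈ CS, ∃ (c : ℕ) (A : Formula), F = Formula.just (Term.const c) A ∧ Axm A

/-- `CS` is axiomatically appropriate for axioms `Axm`:
for every axiom `A` there is a constant `c` with `c : A ∈ CS`. -/
def AxApprop (Axm : Formula → Prop) (CS : Set Formula) : Prop :=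
  ∀ A : Formula, Axm A → ∃ c : ℕ, Formula.just (Term.const c) A ∈ CS

/-- `CS` is schematic: the set of axioms justified by a given constant consists of
axiom schemes, i.e. it is closed under simultaneous substitution of terms for term
variables and formulas for atomic propositions. -/
def Schematic (CS : Set Formula) : Prop :=
  ∀ (c : ℕ) (A : Formula), Formula.just (Term.const c) A ∈ CS →
    ∀ (σ : ℕ → Term) (τ : ℕ → Formula),
      Formula.just (Term.const c) (A.subst σ τ) ∈ CS

/-- `CS` is decidable: some computable function decides membership in `CS`
(via the explicit Gödel numbering of formulas). -/
def DecidableCS (CS : Set Formula) : Prop :=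
  ∃ C : ℕ → Bool, Computable C ∧ ∀ F : Formula, F ∈ CS ↔ C F.code = true

/-- Hilbert-style derivability with the iterated axiom necessitation rule (AN!):
from `c : A ∈ CS` infer `!ⁿc : !ⁿ⁻¹c : ⋯ : !c : c : A` for every `n ≥ 0`. -/
inductive DerivB (Axm : Formula → Prop) (CS : Set Formula) : Formula → Prop
  | ax {A : Formula} : Axm A → DerivB Axm CS A
  | mp {A B : Formula} : DerivB Axm CS (A.impl B) → DerivB Axm CS A → DerivB Axm CS B
  | an (c : ℕ) (A : Formula) (n : ℕ) :
      Formula.just (Term.const c) A ∈ CS →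
      DerivB Axm CS (Formula.just (towerT (Term.const c) n) (towerF (Term.const c) A n))

/-- Hilbert-style derivability with the simple axiom necessitation rule (AN):
from `c : A ∈ CS` infer `c : A`. -/
inductive DerivS (Axm : Formula → Prop) (CS : Set Formula) : Formula → Prop
  | ax {A : Formula} : Axm A → DerivS Axm CS A
  | mp {A B : Formula} : DerivS Axm CS (A.impl B) → DerivS Axm CS A → DerivS Axm CS B
  | an (c : ℕ) (A : Formula) :
      Formula.just (Term.const c) A ∈ CS →
      DerivS Axm CS (Formula.just (Term.const c) A)

/-- A structure for Fitting models: a nonempty set of worlds, an accessibility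
relation, an evidence relation and a valuation. -/
structure Model : Type 1 where
  World : Type
  nonempty : Nonempty World
  R : World → World → Prop
  E : Term → Formula → World → Prop
  val : ℕ → World → Prop

/-- The satisfaction relation `M, w ⊩ A`. -/
def Sat (M : Model) : Formula → M.World → Prop
  | .atom n, w => M.val n w
  | .neg A, w => ¬ Sat M A w
  | .impl A B, w => Sat M A w → Sat M B w
  | .just t A, w => M.E t A w ∧ ∀ v : M.World, M.R w v → Sat M A v

/-- The evidence relation of a model, as a set of triples. -/
def EvSet (M : Model) : Set (Term × Formula × M.World) :=
  {x | M.E x.1 x.2.1 x.2.2}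

/-- The graph of the valuation: the set `{(w, p) | w ∈ ν(p)}`. -/
def ValSet (M : Model) : Set (M.World × ℕ) :=
  {p | M.val p.2 p.1}

/-- Seriality of a relation: every world has a successor. -/
def Serial {W : Type} (R : W → W → Prop) : Prop := ∀ w : W, ∃ v : W, R w v

/-- Admissible evidence relation for the logics without the (j4) axiom:
closure under sum and application, and the constant specification condition
with iterated `!`. -/
def AdmissibleBang (CS : Set Formula) {W : Type}
    (E : Set (Term × Formula × W)) : Prop :=
  (∀ (s t : Term) (A : Formula) (w : W),
      ((s, A, w) ∈ E ∨ (t, A, w) ∈ E) → (Term.sum s t, A, w) ∈ E) ∧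
  (∀ (s t : Term) (A B : Formula) (w : W),
      (s, A.impl B, w) ∈ E → (t, A, w) ∈ E → (Term.app s t, B, w) ∈ E) ∧
  (∀ (c : ℕ) (A : Formula) (w : W) (n : ℕ),
      Formula.just (Term.const c) A ∈ CS →
      (towerT (Term.const c) n, towerF (Term.const c) A n, w) ∈ E)

/-- Admissible evidence relation for the logics with the (j4) axiom:
closure under sum and application, the simple constant specification condition,
closure under `!`, and monotonicity along the accessibility relation. -/
def AdmissibleJ4 (CS : Set Formula) {W : Type} (R : W → W → Prop)
    (E : Set (Term × Formula × W)) : Prop :=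
  (∀ (s t : Term) (A : Formula) (w : W),
      ((s, A, w) ∈ E ∨ (t, A, w) ∈ E) → (Term.sum s t, A, w) ∈ E) ∧
  (∀ (s t : Term) (A B : Formula) (w : W),
      (s, A.impl B, w) ∈ E → (t, A, w) ∈ E → (Term.app s t, B, w) ∈ E) ∧
  (∀ (c : ℕ) (A : Formula) (w : W),
      Formula.just (Term.const c) A ∈ CS → (Term.const c, A, w) ∈ E) ∧
  (∀ (t : Term) (A : Formula) (w : W),
      (t, A, w) ∈ E → (Term.bang t, Formula.just t A, w) ∈ E) ∧
  (∀ (t : Term) (A : Formula) (w v : W),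
      (t, A, w) ∈ E → R w v → (t, A, v) ∈ E)

/-- `M` is a Fitting model for `J_CS`. -/
def IsModelJ (CS : Set Formula) (M : Model) : Prop :=
  AdmissibleBang CS (EvSet M)

/-- `M` is a Fitting model for `JT_CS`: additionally `R` is reflexive. -/
def IsModelJT (CS : Set Formula) (M : Model) : Prop :=
  Reflexive M.R ∧ AdmissibleBang CS (EvSet M)

/-- `M` is a Fitting model for `JD_CS`: additionally `R` is serial. -/
def IsModelJD (CS : Set Formula) (M : Model) : Prop :=
  Serial M.R ∧ AdmissibleBang CS (EvSet M)

/-- `M` is a Fitting model for `J4_CS`: `R` is transitive. -/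
def IsModelJ4 (CS : Set Formula) (M : Model) : Prop :=
  Transitive M.R ∧ AdmissibleJ4 CS M.R (EvSet M)

/-- `M` is a Fitting model for `JD4_CS`: `R` is serial and transitive. -/
def IsModelJD4 (CS : Set Formula) (M : Model) : Prop :=
  Serial M.R ∧ Transitive M.R ∧ AdmissibleJ4 CS M.R (EvSet M)

/-- `M` is a Fitting model for `LP_CS`: `R` is reflexive and transitive. -/
def IsModelLP (CS : Set Formula) (M : Model) : Prop :=
  Reflexive M.R ∧ Transitive M.R ∧ AdmissibleJ4 CS M.R (EvSet M)

/-- `B` is a base for the evidence relation of `M`, and that evidence relation is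
minimal (least) among the admissible ones (non-(j4) version) containing `B`. -/
def MinBaseBang (CS : Set Formula) (M : Model)
    (B : Set (Term × Formula × M.World)) : Prop :=
  B ⊆ EvSet M ∧
  ∀ E' : Set (Term × Formula × M.World),
    AdmissibleBang CS E' → B ⊆ E' → EvSet M ⊆ E'

/-- `B` is a base for the evidence relation of `M`, and that evidence relation is
minimal (least) among the admissible ones ((j4) version) containing `B`. -/
def MinBaseJ4 (CS : Set Formula) (M : Model)
    (B : Set (Term × Formula × M.World)) : Prop :=
  B ⊆ EvSet M ∧
  ∀ E' : Set (Term × Formula × M.World),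
    AdmissibleJ4 CS M.R E' → B ⊆ E' → EvSet M ⊆ E'

/-- `M` is finitary (non-(j4) version): finitely many worlds, the evidence relation
is the minimal admissible one over some finite base, and the valuation has finite graph. -/
def FinitaryBang (CS : Set Formula) (M : Model) : Prop :=
  Finite M.World ∧
  (∃ B : Set (Term × Formula × M.World), B.Finite ∧ MinBaseBang CS M B) ∧
  (ValSet M).Finite

/-- `M` is finitary ((j4) version): finitely many worlds, the evidence relation
is the minimal admissible one over some finite base, and the valuation has finite graph. -/
def FinitaryJ4 (CS : Set Formula) (M : Model) : Prop :=
  Finite M.World ∧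
  (∃ B : Set (Term × Formula × M.World), B.Finite ∧ MinBaseJ4 CS M B) ∧
  (ValSet M).Finite


section Completeness

open Formula Term

/-- Derivability from hypotheses. -/
inductive Der (CS : Set Formula) (G : Set Formula) : Formula → Prop
  | ax {A : Formula} : AxLP A → Der CS G A
  | hyp {A : Formula} : A ∈ G → Der CS G A
  | mp {A B : Formula} : Der CS G (A.impl B) → Der CS G A → Der CS G B
  | an (c : ℕ) (A : Formula) : Formula.just (Term.const c) A ∈ CS →
      Der CS G (Formula.just (Term.const c) A)

variable {CS G D : Set Formula} {A B C : Formula}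

theorem Der.mono (h : Der CS G A) (hG : G ⊆ D) : Der CS D A := by
  induction h with
  | ax h => exact .ax h
  | hyp h => exact .hyp (hG h)
  | mp _ _ ih1 ih2 => exact .mp ih1 ih2
  | an c A h => exact .an c A h

theorem Der.toDerivS (h : Der CS ∅ A) : DerivS AxLP CS A := by
  induction h with
  | ax h => exact .ax h
  | hyp h => exact absurd h (Set.notMem_empty _)
  | mp _ _ ih1 ih2 => exact .mp ih1 ih2
  | an c A h => exact .an c A h

theorem Der.idd : Der CS G (A.impl A) :=
  ((Der.ax (.s A (A.impl A) A)).mp (.ax (.k A (A.impl A)))).mp (.ax (.k A A))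

theorem Der.k1 (h : Der CS G B) : Der CS G (A.impl B) :=
  (Der.ax (.k B A)).mp h

theorem deduction (h : Der CS (insert A G) B) : Der CS G (A.impl B) := by
  induction h with
  | ax h => exact Der.k1 (.ax h)
  | hyp h =>
    rcases h with h | h
    · exact h ▸ Der.idd
    · exact Der.k1 (.hyp h)
  | mp _ _ ih1 ih2 => exact ((Der.ax (.s A _ _)).mp ih1).mp ih2
  | an c A h => exact Der.k1 (.an c A h)

/-- ¬A → (A → B). -/
theorem Der.l1 : Der CS G ((A.neg).impl (A.impl B)) := by
  apply deduction
  exact (Der.ax (.dn B A)).mp ((Der.ax (.k A.neg B.neg)).mp (.hyp (Set.mem_insert _ _)))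

/-- ¬¬A → A. -/
theorem Der.dne : Der CS G ((A.neg.neg).impl A) := by
  apply deduction
  have h1 : Der CS (insert A.neg.neg G) (A.neg.impl ((A.impl A).neg)) :=
    (Der.l1.mono (Set.subset_insert _ _)).mp (.hyp (Set.mem_insert _ _))
  exact ((Der.ax (.dn A (A.impl A))).mp h1).mp Der.idd

/-- falsum → A. -/
theorem Der.efq : Der CS G (Formula.falsum.impl A) := by
  apply deduction
  have h : Der CS (insert Formula.falsum G)
      (((Formula.atom 0).impl (Formula.atom 0)).impl A) :=
    Der.l1.mp (.hyp (Set.mem_insert _ _))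
  exact h.mp Der.idd

/-- (A → falsum) → ¬A. -/
theorem Der.negI : Der CS G ((A.impl Formula.falsum).impl A.neg) := by
  apply deduction
  have h1 : Der CS (insert (A.impl Formula.falsum) G)
      (A.neg.neg.impl (((Formula.atom 0).impl (Formula.atom 0)).neg)) := by
    apply deduction
    have hA : Der CS (insert A.neg.neg (insert (A.impl Formula.falsum) G)) A :=
      Der.dne.mp (.hyp (Set.mem_insert _ _))
    have hf := (Der.hyp (Set.mem_insert_of_mem _ (Set.mem_insert _ _))).mp hA
    exact Der.efq.mp hf
  exact ((Der.ax (.dn A.neg _)).mp h1).mp Der.idd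

/-- Consistency. -/
def Con (CS G : Set Formula) : Prop := ¬ Der CS G Formula.falsum

/-- Maximal consistent set. -/
def MCS (CS : Set Formula) (w : Set Formula) : Prop :=
  Con CS w ∧ ∀ A : Formula, A ∉ w → ¬ Con CS (insert A w)

theorem MCS.mem_of_der (hw : MCS CS G) (h : Der CS G A) : A ∈ G := by
  by_contra hA
  refine hw.2 A hA fun hf => hw.1 ((deduction hf).mp h)

theorem MCS.neg_mem_iff (hw : MCS CS G) : A.neg ∈ G ↔ A ∉ G := by
  constructor
  · intro hn hA
    exact hw.1 ((Der.l1.mp (.hyp hn)).mp (.hyp hA))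
  · intro hA
    have h := hw.2 A hA
    rw [Con, not_not] at h
    exact hw.mem_of_der (Der.negI.mp (deduction h))

theorem MCS.impl_mem_iff (hw : MCS CS G) : A.impl B ∈ G ↔ (A ∈ G → B ∈ G) := by
  constructor
  · intro h hA
    exact hw.mem_of_der ((Der.hyp h).mp (.hyp hA))
  · intro h
    by_cases hA : A ∈ G
    · exact hw.mem_of_der (Der.k1 (.hyp (h hA)))
    · exact hw.mem_of_der (Der.l1.mp (.hyp (hw.neg_mem_iff.2 hA)))

/-- Compactness of derivability. -/
theorem Der.finite (h : Der CS G A) :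
    ∃ G₀ : Set Formula, G₀.Finite ∧ G₀ ⊆ G ∧ Der CS G₀ A := by
  induction h with
  | ax h => exact ⟨∅, Set.finite_empty, Set.empty_subset _, .ax h⟩
  | hyp h => exact ⟨{_}, Set.finite_singleton _, Set.singleton_subset_iff.2 h, .hyp rfl⟩
  | mp _ _ ih1 ih2 =>
    obtain ⟨G₁, hf1, hs1, hd1⟩ := ih1
    obtain ⟨G₂, hf2, hs2, hd2⟩ := ih2
    exact ⟨G₁ ∪ G₂, hf1.union hf2, Set.union_subset hs1 hs2,
      (hd1.mono Set.subset_union_left).mp (hd2.mono Set.subset_union_right)⟩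
  | an c A h => exact ⟨∅, Set.finite_empty, Set.empty_subset _, .an c A h⟩

theorem chain_finite_subset {c : Set (Set Formula)} (hchain : IsChain (· ⊆ ·) c)
    (hne : c.Nonempty) {G₀ : Set Formula} (hf : G₀.Finite) (hsub : G₀ ⊆ ⋃₀ c) :
    ∃ s ∈ c, G₀ ⊆ s := by
  refine Set.Finite.induction_on (motive := fun t _ => t ⊆ ⋃₀ c → ∃ s ∈ c, t ⊆ s) G₀ hf
    (fun _ => ⟨hne.choose, hne.choose_spec, Set.empty_subset _⟩) ?_ hsub
  intro x t hx htf ih hsub'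
  obtain ⟨s, hsc, hts⟩ := ih ((Set.subset_insert _ _).trans hsub')
  obtain ⟨u, huc, hxu⟩ := hsub' (Set.mem_insert _ _)
  rcases eq_or_ne s u with rfl | hne'
  · exact ⟨s, hsc, Set.insert_subset hxu hts⟩
  · rcases hchain hsc huc hne' with h | h
    · exact ⟨u, huc, Set.insert_subset hxu (hts.trans h)⟩
    · exact ⟨s, hsc, Set.insert_subset (h hxu) hts⟩

theorem lindenbaum (hG : Con CS G) : ∃ w : Set Formula, G ⊆ w ∧ MCS CS w := by
  obtain ⟨m, hm, hmax⟩ := zorn_subset_nonempty {D : Set Formula | Con CS D}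
    (fun c hc hchain hne => by
      refine ⟨⋃₀ c, ?_, fun s hs => Set.subset_sUnion_of_mem hs⟩
      intro hder
      obtain ⟨G₀, hf, hsub, hd⟩ := hder.finite
      obtain ⟨s, hsc, hss⟩ := chain_finite_subset hchain hne hf hsub
      exact hc hsc (hd.mono hss))
    G hG
  refine ⟨m, hm, hmax.1, fun A hA hcon => hA ?_⟩
  have := hmax.2 hcon (Set.subset_insert _ _)
  exact this (Set.mem_insert _ _)

/-- The canonical model. -/
noncomputable def canonical (CS : Set Formula) (w₀ : {w : Set Formula // MCS CS w}) :
    Model where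
  World := {w : Set Formula // MCS CS w}
  nonempty := ⟨w₀⟩
  R w v := ∀ (t : Term) (B : Formula), Formula.just t B ∈ w.1 → B ∈ v.1
  E t B w := Formula.just t B ∈ w.1
  val n w := Formula.atom n ∈ w.1

theorem truth_lemma (CS : Set Formula) (w₀ : {w : Set Formula // MCS CS w})
    (B : Formula) : ∀ w : (canonical CS w₀).World, Sat (canonical CS w₀) B w ↔ B ∈ w.1 := by
  induction B with
  | atom n => intro w; exact Iff.rfl
  | neg A ih =>
    intro w
    simp only [Sat, ih w]
    exact (w.2.neg_mem_iff).symm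
  | impl A B ihA ihB =>
    intro w
    simp only [Sat, ihA w, ihB w]
    exact (w.2.impl_mem_iff).symm
  | just t A ih =>
    intro w
    constructor
    · intro ⟨hE, _⟩; exact hE
    · intro h
      refine ⟨h, fun v hv => (ih v).2 (hv t A h)⟩

theorem truth_neg (CS : Set Formula) (w₀ : {w : Set Formula // MCS CS w})
    (B : Formula) (w : (canonical CS w₀).World) :
    Sat (canonical CS w₀) B w ↔ B ∈ w.1 := truth_lemma CS w₀ B w

end Completeness

/-- Completeness of `LP_CS`: if a formula is not derivable in the Hilbert system
`LP_CS` (with constant specification `CS`), then it fails at some world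
of some Fitting model for `LP_CS`. -/
theorem completeness_LP (CS : Set Formula) (hCS : ConstSpec AxLP CS) (A : Formula)
    (hA : ¬ DerivS AxLP CS A) :
    ∃ M : Model, IsModelLP CS M ∧ ∃ w : M.World, ¬ Sat M A w := by
  -- `{¬A}` is consistent
  have hconA : Con CS {A.neg} := by
    intro hder
    apply hA
    have h1 : Der CS ∅ (A.neg.impl Formula.falsum) := by
      apply deduction
      have he : insert A.neg (∅ : Set Formula) = {A.neg} := by simp
      rw [he]
      exact hder
    have h2 : Der CS ∅ A := Der.dne.mp (Der.negI.mp h1)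
    exact h2.toDerivS
  obtain ⟨w, hw, hmcs⟩ := lindenbaum hconA
  let w₀ : {w : Set Formula // MCS CS w} := ⟨w, hmcs⟩
  let M := canonical CS w₀
  have hR_refl : Reflexive M.R := by
    intro v t B hB
    exact v.2.mem_of_der ((Der.ax (.jt t B rfl)).mp (.hyp hB))
  have hR_trans : Transitive M.R := by
    intro u v x huv hvx t B hB
    have h4 : Formula.just (Term.bang t) (Formula.just t B) ∈ u.1 :=
      u.2.mem_of_der ((Der.ax (.j4 t B rfl)).mp (.hyp hB))
    exact hvx t B (huv _ _ h4)
  refine ⟨M, ⟨hR_refl, hR_trans, ?_, ?_, ?_, ?_, ?_⟩, w₀, ?_⟩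
  · -- sum
    rintro s t B v (h | h)
    · have hor : Der CS v.1 ((Formula.just s B).or (Formula.just t B)) := by
        apply deduction
        exact Der.l1.mp (.hyp (Set.mem_insert _ _)) |>.mp
          ((Der.hyp (Set.mem_insert_of_mem _ h)))
      exact v.2.mem_of_der ((Der.ax (.a3 s t B)).mp hor)
    · have hor : Der CS v.1 ((Formula.just s B).or (Formula.just t B)) :=
        Der.k1 (.hyp h)
      exact v.2.mem_of_der ((Der.ax (.a3 s t B)).mp hor)
  · -- app
    intro s t B C v hs ht
    exact v.2.mem_of_der (((Der.ax (.a2 s t B C)).mp (.hyp hs)).mp (.hyp ht))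
  · -- const
    intro c B v hcB
    exact v.2.mem_of_der (.an c B hcB)
  · -- bang
    intro t B v h
    exact v.2.mem_of_der ((Der.ax (.j4 t B rfl)).mp (.hyp h))
  · -- monotone
    intro t B v u h hvu
    have h4 : Formula.just (Term.bang t) (Formula.just t B) ∈ v.1 :=
      v.2.mem_of_der ((Der.ax (.j4 t B rfl)).mp (.hyp h))
    exact hvu _ _ h4
  · -- A fails at w₀
    intro hSat
    have hAmem : A ∈ w := (truth_lemma CS w₀ A w₀).1 hSat
    exact hmcs.1 ((Der.l1.mp (.hyp (hw rfl))).mp (.hyp hAmem))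


end JustificationLogic
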